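/- (Uniqueness of prime factorization.) Let φ be an isomorphism between nontrivial, connected finite graphs with loops G and H, each with at least one unlooped vertex, where G = □_{i : Fin k} G i and H = □_{j : Fin ℓ} H j are Cartesian products of irreducible graphs. Then k = ℓ and there is a permutation π of Fin k such that G i is isomorphic to H (π i) for every i. -/

import Mathlib

universe u

/-- A graph with loops on a vertex type `V`: a symmetric binary relation. -/
structure LoopGraph (V : Type*) where
  adj : V → V → Prop
  symm : ∀ u v, adj u v → adj v u

namespace LoopGraph

/-- The Cartesian product `G □ H` of two graphs with loops. -/
def box {V W : Type*} (G : LoopGraph V) (H : LoopGraph W) : LoopGraph (V × W) where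
  adj p q := (G.adj p.1 q.1 ∧ p.2 = q.2) ∨ (p.1 = q.1 ∧ H.adj p.2 q.2)
  symm p q h := by
    rcases h with ⟨h, e⟩ | ⟨e, h⟩
    · exact Or.inl ⟨G.symm _ _ h, e.symm⟩
    · exact Or.inr ⟨e.symm, H.symm _ _ h⟩

/-- The Cartesian product `□_i G i` of a finite family of graphs with loops. -/
def boxPi {k : ℕ} {V : Fin k → Type*} (G : ∀ i, LoopGraph (V i)) :
    LoopGraph (∀ i, V i) where
  adj x y := ∃ i, (G i).adj (x i) (y i) ∧ ∀ j, j ≠ i → x j = y j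
  symm x y h := by
    obtain ⟨i, h1, h2⟩ := h
    exact ⟨i, (G i).symm _ _ h1, fun j hj => (h2 j hj).symm⟩

/-- Two graphs with loops are isomorphic if there is a bijection of the vertex
types preserving and reflecting adjacency. -/
def IsIsomorphic {V W : Type*} (G : LoopGraph V) (H : LoopGraph W) : Prop :=
  ∃ φ : V ≃ W, ∀ u v, G.adj u v ↔ H.adj (φ u) (φ v)

/-- `N G` is `G` with its loops removed, as a simple graph. -/
def N {V : Type*} (G : LoopGraph V) : SimpleGraph V where
  Adj u v := u ≠ v ∧ G.adj u v
  symm := ⟨fun _ _ h => ⟨h.1.symm, G.symm _ _ h.2⟩⟩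
  loopless := ⟨fun _ h => h.1 rfl⟩

/-- `G` with its loops removed, as a graph with loops. -/
def removeLoops {V : Type*} (G : LoopGraph V) : LoopGraph V where
  adj u v := u ≠ v ∧ G.adj u v
  symm u v h := ⟨h.1.symm, G.symm _ _ h.2⟩

/-- `G` with a loop attached to every vertex. -/
def fullLoops {V : Type*} (G : LoopGraph V) : LoopGraph V where
  adj u v := G.adj u v ∨ u = v
  symm u v h := by
    rcases h with h | h
    · exact Or.inl (G.symm _ _ h)
    · exact Or.inr h.symm

/-- A graph with loops is trivial if it has exactly one vertex and no loop. -/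
def IsTrivial {V : Type*} (G : LoopGraph V) : Prop :=
  (∃ v : V, ∀ w : V, w = v) ∧ ∀ v, ¬ G.adj v v

/-- A nontrivial connected graph with loops with at least one unlooped vertex is
irreducible if in every factorization into two factors, one factor is trivial. -/
def Irreducible {V : Type u} (G : LoopGraph V) : Prop :=
  ¬ G.IsTrivial ∧ G.N.Connected ∧ (∃ v, ¬ G.adj v v) ∧
    ∀ (W L : Type u) (H : LoopGraph W) (K : LoopGraph L),
      G.IsIsomorphic (H.box K) → H.IsTrivial ∨ K.IsTrivial

/-- A set of vertices is convex if every shortest walk (in `N G`) between two of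
its vertices stays inside the set. -/
def ConvexSet {V : Type*} (G : LoopGraph V) (S : Set V) : Prop :=
  ∀ u ∈ S, ∀ v ∈ S, ∀ p : G.N.Walk u v,
    p.length = G.N.dist u v → ∀ x ∈ p.support, x ∈ S

/-- The disjoint union of two graphs with loops. -/
def disjUnion {W U : Type*} (H : LoopGraph W) (K : LoopGraph U) :
    LoopGraph (W ⊕ U) where
  adj x y := Sum.LiftRel H.adj K.adj x y
  symm x y h := by
    cases h with
    | inl h => exact Sum.LiftRel.inl (H.symm _ _ h)
    | inr h => exact Sum.LiftRel.inr (K.symm _ _ h)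

/-- The trivial graph `K₁`: one vertex, no loop. -/
def K1 : LoopGraph PUnit := ⟨fun _ _ => False, fun _ _ h => h.elim⟩

/-- The single looped vertex `K₁*`. -/
def K1star : LoopGraph PUnit := ⟨fun _ _ => True, fun _ _ _ => trivial⟩

/-- The 0/1 adjacency matrix of a graph with loops. -/
def adjMatrix {V : Type*} (G : LoopGraph V) [DecidableRel G.adj] : Matrix V V ℕ :=
  Matrix.of fun u v => if G.adj u v then 1 else 0

end LoopGraph

namespace LoopGraph

variable {V W X Y : Type*}

theorem iso_refl (G : LoopGraph V) : G.IsIsomorphic G :=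
  ⟨Equiv.refl _, fun _ _ => Iff.rfl⟩

theorem IsIsomorphic.symm {G : LoopGraph V} {H : LoopGraph W} (h : G.IsIsomorphic H) :
    H.IsIsomorphic G := by
  obtain ⟨φ, hφ⟩ := h
  exact ⟨φ.symm, fun u v => by
    rw [hφ]
    simp⟩

theorem IsIsomorphic.trans {G : LoopGraph V} {H : LoopGraph W} {K : LoopGraph X}
    (h1 : G.IsIsomorphic H) (h2 : H.IsIsomorphic K) : G.IsIsomorphic K := by
  obtain ⟨φ, hφ⟩ := h1
  obtain ⟨τ, hτ⟩ := h2
  exact ⟨φ.trans τ, fun u v => (hφ u v).trans (hτ _ _)⟩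

theorem IsIsomorphic.box_congr {G : LoopGraph V} {H : LoopGraph W} {G' : LoopGraph X}
    {H' : LoopGraph Y} (h1 : G.IsIsomorphic G') (h2 : H.IsIsomorphic H') :
    (G.box H).IsIsomorphic (G'.box H') := by
  obtain ⟨φ, hφ⟩ := h1
  obtain ⟨τ, hτ⟩ := h2
  refine ⟨φ.prodCongr τ, fun u v => ?_⟩
  simp only [box, Equiv.prodCongr_apply, Prod.map]
  rw [hφ, hτ, φ.apply_eq_iff_eq, τ.apply_eq_iff_eq]

theorem IsIsomorphic.isTrivial {G : LoopGraph V} {H : LoopGraph W} (h : G.IsIsomorphic H)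
    (ht : G.IsTrivial) : H.IsTrivial := by
  obtain ⟨φ, hφ⟩ := h
  obtain ⟨⟨v, hv⟩, hl⟩ := ht
  refine ⟨⟨φ v, fun w => ?_⟩, fun w hw => ?_⟩
  · have := hv (φ.symm w); rw [← φ.apply_symm_apply w, this]
  · have : G.adj (φ.symm w) (φ.symm w) := by
      rw [hφ]; simpa using hw
    exact hl _ this

theorem IsTrivial.box {G : LoopGraph V} {H : LoopGraph W} (h1 : G.IsTrivial)
    (h2 : H.IsTrivial) : (G.box H).IsTrivial := by
  obtain ⟨⟨v, hv⟩, hl⟩ := h1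
  obtain ⟨⟨w, hw⟩, hl'⟩ := h2
  refine ⟨⟨(v, w), fun p => Prod.ext (hv _) (hw _)⟩, fun p hp => ?_⟩
  rcases hp with ⟨h, _⟩ | ⟨_, h⟩
  · exact hl _ h
  · exact hl' _ h

/-- If `K` is trivial then `G □ K ≅ G`. -/
theorem box_trivial_right {G : LoopGraph V} {K : LoopGraph W} (h : K.IsTrivial) :
    (G.box K).IsIsomorphic G := by
  obtain ⟨⟨w, hw⟩, hl⟩ := h
  haveI : Unique W := ⟨⟨w⟩, hw⟩
  refine ⟨Equiv.prodUnique V W, fun u v => ?_⟩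
  simp only [box, Equiv.prodUnique_apply]
  constructor
  · rintro (⟨h, _⟩ | ⟨_, h⟩)
    · exact h
    · exact absurd (hw u.2 ▸ hw v.2 ▸ h) (by simpa [hw u.2, hw v.2] using hl w)
  · intro h
    exact Or.inl ⟨h, Subsingleton.elim _ _⟩

theorem box_trivial_left {G : LoopGraph V} {K : LoopGraph W} (h : K.IsTrivial) :
    (K.box G).IsIsomorphic G := by
  obtain ⟨⟨w, hw⟩, hl⟩ := h
  haveI : Unique W := ⟨⟨w⟩, hw⟩
  refine ⟨Equiv.uniqueProd V W, fun u v => ?_⟩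
  simp only [box, Equiv.uniqueProd_apply]
  constructor
  · rintro (⟨h, _⟩ | ⟨_, h⟩)
    · exact absurd (hw u.1 ▸ hw v.1 ▸ h) (by simpa [hw u.1, hw v.1] using hl w)
    · exact h
  · intro h
    exact Or.inr ⟨Subsingleton.elim _ _, h⟩

theorem box_comm (G : LoopGraph V) (H : LoopGraph W) :
    (G.box H).IsIsomorphic (H.box G) := by
  refine ⟨Equiv.prodComm V W, fun u v => ?_⟩
  simp only [box, Equiv.prodComm_apply, Prod.fst_swap, Prod.snd_swap]
  tauto

/-- The simple graph `N (G □ H)` is the box product of the `N`s. -/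
theorem N_box (G : LoopGraph V) (H : LoopGraph W) : (G.box H).N = G.N □ H.N := by
  ext ⟨a, b⟩ ⟨a', b'⟩
  simp only [N, SimpleGraph.boxProd_adj, box]
  constructor
  · rintro ⟨hne, ⟨h, rfl⟩ | ⟨rfl, h⟩⟩
    · exact Or.inl ⟨⟨fun hh => hne (by rw [hh]), h⟩, rfl⟩
    · exact Or.inr ⟨⟨fun hh => hne (by rw [hh]), h⟩, rfl⟩
  · rintro (⟨⟨hne, h⟩, rfl⟩ | ⟨⟨hne, h⟩, rfl⟩)
    · exact ⟨fun hh => hne (congrArg Prod.fst hh), Or.inl ⟨h, rfl⟩⟩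
    · exact ⟨fun hh => hne (congrArg Prod.snd hh), Or.inr ⟨rfl, h⟩⟩

/-- An isomorphism of loop graphs induces an isomorphism of their simple graphs. -/
def nIso {G : LoopGraph V} {H : LoopGraph W} (φ : V ≃ W)
    (hφ : ∀ u v, G.adj u v ↔ H.adj (φ u) (φ v)) : G.N ≃g H.N where
  toEquiv := φ
  map_rel_iff' := by
    intro u v
    simp only [N, Equiv.coe_fn_mk, ne_eq, EmbeddingLike.apply_eq_iff_eq]
    rw [← hφ]

theorem connected_of_iso {G : LoopGraph V} {H : LoopGraph W} (φ : V ≃ W)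
    (hφ : ∀ u v, G.adj u v ↔ H.adj (φ u) (φ v)) (hc : G.N.Connected) : H.N.Connected :=
  (SimpleGraph.Iso.connected_iff (nIso φ hφ)).1 hc

theorem box_connected_iff {G : LoopGraph V} {H : LoopGraph W} :
    (G.box H).N.Connected ↔ G.N.Connected ∧ H.N.Connected := by
  rw [N_box]; exact SimpleGraph.connected_boxProd

theorem N_adj {G : LoopGraph V} {u v : V} : G.N.Adj u v ↔ u ≠ v ∧ G.adj u v := Iff.rfl

theorem box_adj_self {G : LoopGraph V} {H : LoopGraph W} {a : V} {b : W} :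
    (G.box H).adj (a, b) (a, b) ↔ G.adj a a ∨ H.adj b b := by
  simp [box]

end LoopGraph
namespace LoopGraph
open Relation

section RelLemmas
variable {X : Type*} {rC rD : X → X → Prop}

theorem rel_commute (sq : ∀ ⦃x y z : X⦄, rD x y → rC y z → ∃ t, rC x t ∧ rD t z) :
    ∀ ⦃x y z : X⦄, rD x y → ReflTransGen rC y z → ∃ t, ReflTransGen rC x t ∧ rD t z := by
  intro x y z hxy hyz
  induction hyz using ReflTransGen.head_induction_on generalizing x with
  | refl => exact ⟨x, ReflTransGen.refl, hxy⟩
  | head h _ ih =>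
    obtain ⟨t1, ht1, ht2⟩ := sq hxy h
    obtain ⟨t, htt, htz⟩ := ih ht2
    exact ⟨t, ReflTransGen.head ht1 htt, htz⟩

theorem rel_sort (sq : ∀ ⦃x y z : X⦄, rD x y → rC y z → ∃ t, rC x t ∧ rD t z)
    (hsymm : ∀ ⦃x y⦄, rD x y → rD y x) :
    ∀ ⦃p q : X⦄, ReflTransGen (fun u v => rC u v ∨ rD u v) q p →
      ∃ a, ReflTransGen rC q a ∧ ReflTransGen rD p a := by
  intro p q h
  induction h using ReflTransGen.head_induction_on with
  | refl => exact ⟨p, ReflTransGen.refl, ReflTransGen.refl⟩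
  | head h' _ ih =>
    obtain ⟨a, ha1, ha2⟩ := ih
    rcases h' with hC | hD
    · exact ⟨a, ReflTransGen.head hC ha1, ha2⟩
    · obtain ⟨t, ht1, ht2⟩ := rel_commute sq hD ha1
      exact ⟨t, ht1, ha2.tail (hsymm ht2)⟩

theorem rel_transport (sq : ∀ ⦃x y z : X⦄, rD x y → rC y z → ∃ t, rC x t ∧ rD t z)
    (hsymm : ∀ ⦃x y⦄, rD x y → rD y x) :
    ∀ ⦃x y z : X⦄, ReflTransGen rD x y → rC x z → ∃ t, rC y t ∧ ReflTransGen rD z t := by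
  intro x y z h
  induction h with
  | refl => exact fun he => ⟨z, he, ReflTransGen.refl⟩
  | tail _ hlast ih =>
    intro he
    obtain ⟨t, ht1, ht2⟩ := ih he
    obtain ⟨s, hs1, hs2⟩ := sq (hsymm hlast) ht1
    exact ⟨s, hs1, ht2.tail (hsymm hs2)⟩

theorem rtg_symm (hsymm : ∀ ⦃x y : X⦄, rD x y → rD y x) :
    ∀ ⦃x y : X⦄, ReflTransGen rD x y → ReflTransGen rD y x := by
  intro x y h
  induction h with
  | refl => exact ReflTransGen.refl
  | tail _ hlast ih => exact ReflTransGen.head (hsymm hlast) ih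

end RelLemmas

section WalkLemmas
variable {V : Type*} {Γ : SimpleGraph V} {P : V → Prop}

theorem walk_invariant (step : ∀ u v, Γ.Adj u v → P u → P v) :
    ∀ {u v : V}, Γ.Walk u v → P u → P v := by
  intro u v w
  induction w with
  | nil => exact id
  | cons hadj _ ih => exact fun h => ih (step _ _ hadj h)

theorem connected_invariant (hc : Γ.Connected) (step : ∀ u v, Γ.Adj u v → P u → P v)
    {u v : V} (h : P u) : P v := by
  obtain ⟨w⟩ := hc.preconnected u v
  exact walk_invariant step w h

end WalkLemmas

end LoopGraph
namespace LoopGraph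
open Relation

theorem swap_box_adj {A B : Type u} (G : LoopGraph A) (H : LoopGraph B) (x y : A × B) :
    (G.box H).adj x y ↔ (H.box G).adj x.swap y.swap := by
  simp only [box, Prod.fst_swap, Prod.snd_swap]
  tauto

/-- A bundle of data: one loop graph with two box-product structures. -/
structure Pack (A B C D : Type u) : Type u where
  GA : LoopGraph A
  GB : LoopGraph B
  GC : LoopGraph C
  GD : LoopGraph D
  ψ : A × B ≃ C × D
  a0 : A
  b0 : B
  hψ : ∀ x y, (GA.box GB).adj x y ↔ (GC.box GD).adj (ψ x) (ψ y)
  hul : ¬ (GA.box GB).adj (a0, b0) (a0, b0)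
  hconn : (GA.box GB).N.Connected

namespace Pack

variable {A B C D : Type u}

def c (σ : Pack A B C D) (x : A × B) : C := (σ.ψ x).1
def d (σ : Pack A B C D) (x : A × B) : D := (σ.ψ x).2

/-- Swap the roles of the two factors `A` and `B`. -/
def S1 (σ : Pack A B C D) : Pack B A C D where
  GA := σ.GB
  GB := σ.GA
  GC := σ.GC
  GD := σ.GD
  ψ := (Equiv.prodComm B A).trans σ.ψ
  a0 := σ.b0
  b0 := σ.a0
  hψ := fun x y => by
    rw [swap_box_adj]
    exact σ.hψ x.swap y.swap
  hul := fun h => σ.hul ((swap_box_adj σ.GB σ.GA _ _).1 h)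
  hconn := connected_of_iso (Equiv.prodComm A B)
    (fun u v => swap_box_adj σ.GA σ.GB u v) σ.hconn

/-- Swap the roles of the two factors `C` and `D`. -/
def S2 (σ : Pack A B C D) : Pack A B D C where
  GA := σ.GA
  GB := σ.GB
  GC := σ.GD
  GD := σ.GC
  ψ := σ.ψ.trans (Equiv.prodComm C D)
  a0 := σ.a0
  b0 := σ.b0
  hψ := fun x y => (σ.hψ x y).trans (swap_box_adj σ.GC σ.GD _ _)
  hul := σ.hul
  hconn := σ.hconn

theorem S1_c (σ : Pack A B C D) (x : B × A) : (S1 σ).c x = σ.c x.swap := rfl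
theorem S2_c (σ : Pack A B C D) (x : A × B) : (S2 σ).c x = σ.d x := rfl
theorem S1_d (σ : Pack A B C D) (x : B × A) : (S1 σ).d x = σ.d x.swap := rfl
theorem S2_d (σ : Pack A B C D) (x : A × B) : (S2 σ).d x = σ.c x := rfl

theorem boxCD_conn (σ : Pack A B C D) : (σ.GC.box σ.GD).N.Connected :=
  connected_of_iso σ.ψ σ.hψ σ.hconn

theorem NA_conn (σ : Pack A B C D) : σ.GA.N.Connected := (box_connected_iff.1 σ.hconn).1
theorem NB_conn (σ : Pack A B C D) : σ.GB.N.Connected := (box_connected_iff.1 σ.hconn).2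
theorem NC_conn (σ : Pack A B C D) : σ.GC.N.Connected := (box_connected_iff.1 σ.boxCD_conn).1
theorem ND_conn (σ : Pack A B C D) : σ.GD.N.Connected := (box_connected_iff.1 σ.boxCD_conn).2

theorem ab_of_adj (σ : Pack A B C D) {x y : A × B} (h : (σ.GA.box σ.GB).adj x y)
    (hne : x ≠ y) :
    (x.1 ≠ y.1 ∧ σ.GA.adj x.1 y.1 ∧ x.2 = y.2) ∨
    (x.1 = y.1 ∧ x.2 ≠ y.2 ∧ σ.GB.adj x.2 y.2) := by
  rcases h with ⟨h1, h2⟩ | ⟨h1, h2⟩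
  · exact Or.inl ⟨fun he => hne (Prod.ext he h2), h1, h2⟩
  · exact Or.inr ⟨h1, fun he => hne (Prod.ext h1 he), h2⟩

theorem cd_of_adj (σ : Pack A B C D) {x y : A × B} (h : (σ.GA.box σ.GB).adj x y)
    (hne : x ≠ y) :
    (σ.c x ≠ σ.c y ∧ σ.GC.adj (σ.c x) (σ.c y) ∧ σ.d x = σ.d y) ∨
    (σ.c x = σ.c y ∧ σ.d x ≠ σ.d y ∧ σ.GD.adj (σ.d x) (σ.d y)) := by
  have h' := (σ.hψ x y).1 h
  have hne' : σ.ψ x ≠ σ.ψ y := fun he => hne (σ.ψ.injective he)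
  rcases h' with ⟨h1, h2⟩ | ⟨h1, h2⟩
  · exact Or.inl ⟨fun he => hne' (Prod.ext he h2), h1, h2⟩
  · exact Or.inr ⟨h1, fun he => hne' (Prod.ext h1 he), h2⟩

/-- Vertices of the product are pairs `(c, d)` via `ψ`. -/
theorem psi_eq (σ : Pack A B C D) (x : A × B) : σ.ψ x = (σ.c x, σ.d x) := rfl

theorem eq_of_cd (σ : Pack A B C D) {x y : A × B} (h1 : σ.c x = σ.c y)
    (h2 : σ.d x = σ.d y) : x = y :=
  σ.ψ.injective (by rw [psi_eq, psi_eq, h1, h2])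

end Pack
end LoopGraph
namespace LoopGraph
namespace Pack
open Relation

variable {A B C D : Type u}

/-- The type (C or D) of an `A`-edge does not change when the `B`-coordinate
moves along an edge of `N(B)`. -/
theorem t2chase (σ : Pack A B C D) {a a' : A} {b b' : B} (hne : a ≠ a')
    (hA : σ.GA.adj a a') (hbne : b ≠ b') (hB : σ.GB.adj b b')
    (hCT : σ.c (a, b) ≠ σ.c (a', b)) : σ.c (a, b') ≠ σ.c (a', b') := by
  intro hzEq
  have adjxw : (σ.GA.box σ.GB).adj (a, b) (a', b) := Or.inl ⟨hA, rfl⟩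
  have adjyz : (σ.GA.box σ.GB).adj (a, b') (a', b') := Or.inl ⟨hA, rfl⟩
  have adjxy : (σ.GA.box σ.GB).adj (a, b) (a, b') := Or.inr ⟨rfl, hB⟩
  have adjwz : (σ.GA.box σ.GB).adj (a', b) (a', b') := Or.inr ⟨rfl, hB⟩
  have hxw : (a, b) ≠ (a', b) := fun h => hne (congrArg Prod.fst h)
  have hyz : (a, b') ≠ (a', b') := fun h => hne (congrArg Prod.fst h)
  have hxy : (a, b) ≠ (a, b') := fun h => hbne (congrArg Prod.snd h)
  have hwz : (a', b) ≠ (a', b') := fun h => hbne (congrArg Prod.snd h)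
  -- x-w is C-type
  have hdxw : σ.d (a, b) = σ.d (a', b) := by
    rcases σ.cd_of_adj adjxw hxw with ⟨_, _, h⟩ | ⟨h, _, _⟩
    · exact h
    · exact absurd h hCT
  -- y-z is D-type
  have hdyz : σ.d (a, b') ≠ σ.d (a', b') := by
    rcases σ.cd_of_adj adjyz hyz with ⟨h, _, _⟩ | ⟨_, h, _⟩
    · exact absurd hzEq h
    · exact h
  rcases σ.cd_of_adj adjxy hxy with ⟨hcxy, _, hdxy⟩ | ⟨hcxy, hdxy, _⟩
  · -- x-y C-type
    rcases σ.cd_of_adj adjwz hwz with ⟨_, _, hdwz⟩ | ⟨hcwz, _, _⟩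
    · exact hdyz (hdxy ▸ hdxw ▸ hdwz)
    · -- c y = c z = c w and d y = d x = d w, so y = w
      have : (a, b') = (a', b) := σ.eq_of_cd (by rw [hzEq, ← hcwz]) (by rw [← hdxy, hdxw])
      exact hne (congrArg Prod.fst this)
  · -- x-y D-type
    rcases σ.cd_of_adj adjwz hwz with ⟨_, _, hdwz⟩ | ⟨hcwz, _, _⟩
    · -- c z = c y = c x, d z = d w = d x, so z = x
      have : (a', b') = (a, b) := σ.eq_of_cd (by rw [← hzEq, ← hcxy]) (by rw [← hdwz, ← hdxw])
      exact hne (congrArg Prod.fst this).symm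
    · exact hCT (hcxy.trans (hzEq.trans hcwz.symm))

theorem ctransfer (σ : Pack A B C D) {a a' : A} (hne : a ≠ a') (hA : σ.GA.adj a a')
    {b b' : B} (h : σ.c (a, b) ≠ σ.c (a', b)) : σ.c (a, b') ≠ σ.c (a', b') := by
  refine connected_invariant σ.NB_conn (P := fun β => σ.c (a, β) ≠ σ.c (a', β))
    (fun u v huv hP => ?_) h
  have huv' := N_adj.1 huv
  exact σ.t2chase hne hA huv'.1 huv'.2 hP

theorem ceq_transfer (σ : Pack A B C D) {a a' : A} (hne : a ≠ a') (hA : σ.GA.adj a a')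
    {b b' : B} (h : σ.c (a, b) = σ.c (a', b)) : σ.c (a, b') = σ.c (a', b') := by
  by_contra hcon
  exact σ.ctransfer hne hA (b := b') (b' := b) hcon h

/-- `A`-edges whose type is `C`. -/
def eC (σ : Pack A B C D) (a a' : A) : Prop :=
  σ.GA.adj a a' ∧ a ≠ a' ∧ σ.c (a, σ.b0) ≠ σ.c (a', σ.b0)

/-- `A`-edges whose type is `D`. -/
def eD (σ : Pack A B C D) (a a' : A) : Prop :=
  σ.GA.adj a a' ∧ a ≠ a' ∧ σ.c (a, σ.b0) = σ.c (a', σ.b0)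

theorem eC_symm (σ : Pack A B C D) : ∀ ⦃a a' : A⦄, σ.eC a a' → σ.eC a' a :=
  fun _ _ h => ⟨σ.GA.symm _ _ h.1, h.2.1.symm, h.2.2.symm⟩

theorem eD_symm (σ : Pack A B C D) : ∀ ⦃a a' : A⦄, σ.eD a a' → σ.eD a' a :=
  fun _ _ h => ⟨σ.GA.symm _ _ h.1, h.2.1.symm, h.2.2.symm⟩

theorem eC_all (σ : Pack A B C D) {a a' : A} (h : σ.eC a a') (b : B) :
    σ.c (a, b) ≠ σ.c (a', b) :=
  σ.ctransfer h.2.1 h.1 h.2.2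

theorem eD_all (σ : Pack A B C D) {a a' : A} (h : σ.eD a a') (b : B) :
    σ.c (a, b) = σ.c (a', b) :=
  σ.ceq_transfer h.2.1 h.1 h.2.2

theorem eC_data (σ : Pack A B C D) {a a' : A} (h : σ.eC a a') (b : B) :
    σ.GC.adj (σ.c (a, b)) (σ.c (a', b)) ∧ σ.d (a, b) = σ.d (a', b) := by
  have hadj : (σ.GA.box σ.GB).adj (a, b) (a', b) := Or.inl ⟨h.1, rfl⟩
  have hne : (a, b) ≠ (a', b) := fun he => h.2.1 (congrArg Prod.fst he)
  rcases σ.cd_of_adj hadj hne with ⟨_, h1, h2⟩ | ⟨h1, _, _⟩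
  · exact ⟨h1, h2⟩
  · exact absurd h1 (σ.eC_all h b)

theorem eD_data (σ : Pack A B C D) {a a' : A} (h : σ.eD a a') (b : B) :
    σ.GD.adj (σ.d (a, b)) (σ.d (a', b)) ∧ σ.d (a, b) ≠ σ.d (a', b) := by
  have hadj : (σ.GA.box σ.GB).adj (a, b) (a', b) := Or.inl ⟨h.1, rfl⟩
  have hne : (a, b) ≠ (a', b) := fun he => h.2.1 (congrArg Prod.fst he)
  rcases σ.cd_of_adj hadj hne with ⟨h1, _, _⟩ | ⟨_, h1, h2⟩
  · exact absurd (σ.eD_all h b) h1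
  · exact ⟨h2, h1⟩

/-- The square property for `C`- and `D`-type edges of `A`. -/
theorem square (σ : Pack A B C D) : ∀ ⦃a1 a2 a3 : A⦄, σ.eD a1 a2 → σ.eC a2 a3 →
    ∃ a4, σ.eC a1 a4 ∧ σ.eD a4 a3 := by
  intro a1 a2 a3 hD hC
  have h13 : a1 ≠ a3 := by
    rintro rfl
    exact hC.2.2 (hD.2.2.symm ▸ rfl)
  set z : A × B := σ.ψ.symm (σ.c (a3, σ.b0), σ.d (a1, σ.b0)) with hzdef
  have hψz : σ.ψ z = (σ.c (a3, σ.b0), σ.d (a1, σ.b0)) := σ.ψ.apply_symm_apply _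
  have hcz : σ.c z = σ.c (a3, σ.b0) := by rw [c, hψz]
  have hdz : σ.d z = σ.d (a1, σ.b0) := by rw [d, hψz]
  have hc12 : σ.c (a1, σ.b0) = σ.c (a2, σ.b0) := hD.2.2
  have hc23 : σ.c (a2, σ.b0) ≠ σ.c (a3, σ.b0) := hC.2.2
  have hCadj : σ.GC.adj (σ.c (a2, σ.b0)) (σ.c (a3, σ.b0)) := (σ.eC_data hC σ.b0).1
  have hd23 : σ.d (a2, σ.b0) = σ.d (a3, σ.b0) := (σ.eC_data hC σ.b0).2
  have hDadj : σ.GD.adj (σ.d (a1, σ.b0)) (σ.d (a2, σ.b0)) := (σ.eD_data hD σ.b0).1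
  have hd12 : σ.d (a1, σ.b0) ≠ σ.d (a2, σ.b0) := (σ.eD_data hD σ.b0).2
  have adj1 : (σ.GA.box σ.GB).adj z (a1, σ.b0) := by
    rw [σ.hψ]
    exact Or.inl ⟨show σ.GC.adj (σ.c z) (σ.c (a1, σ.b0)) by
        rw [hcz, hc12]; exact σ.GC.symm _ _ hCadj,
      show σ.d z = σ.d (a1, σ.b0) from hdz⟩
  have zne1 : z ≠ (a1, σ.b0) := by
    intro he
    apply hc23
    rw [← hc12, ← hcz, he]
  have adj3 : (σ.GA.box σ.GB).adj z (a3, σ.b0) := by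
    rw [σ.hψ]
    exact Or.inr ⟨show σ.c z = σ.c (a3, σ.b0) from hcz,
      show σ.GD.adj (σ.d z) (σ.d (a3, σ.b0)) by rw [hdz, ← hd23]; exact hDadj⟩
  have zne3 : z ≠ (a3, σ.b0) := by
    intro he
    apply hd12
    rw [← hdz, he, ← hd23]
  have hzb : z.2 = σ.b0 ∧ z.1 ≠ a1 ∧ σ.GA.adj z.1 a1 := by
    rcases σ.ab_of_adj adj1 zne1 with ⟨h1, h2, h3⟩ | ⟨h1, h2, h3⟩
    · exact ⟨h3, h1, h2⟩
    · rcases σ.ab_of_adj adj3 zne3 with ⟨_, _, h3'⟩ | ⟨h1', _, _⟩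
      · exact absurd h3' h2
      · exact absurd (h1.symm.trans h1') h13
  obtain ⟨hz2, hz1ne, hzA⟩ := hzb
  have hzeq : (z.1, σ.b0) = z := by rw [← hz2]
  have hcz1 : σ.c (z.1, σ.b0) = σ.c (a3, σ.b0) := by rw [hzeq, hcz]
  have h3' : z.1 ≠ a3 ∧ σ.GA.adj z.1 a3 := by
    rcases σ.ab_of_adj adj3 zne3 with ⟨h1, h2, _⟩ | ⟨_, h2, _⟩
    · exact ⟨h1, h2⟩
    · exact absurd hz2 h2
  exact ⟨z.1, ⟨σ.GA.symm _ _ hzA, fun he => hz1ne he.symm,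
      fun he => hc23 (hc12.symm.trans (he.trans hcz1))⟩,
    ⟨h3'.2, h3'.1, hcz1⟩⟩

end Pack
end LoopGraph
namespace LoopGraph
namespace Pack
open Relation

variable {A B C D : Type u}

/-- The setoid generated by `D`-type edges of `A`. -/
def sd (σ : Pack A B C D) : Setoid A :=
  ⟨ReflTransGen σ.eD, ⟨fun _ => ReflTransGen.refl, fun h => rtg_symm σ.eD_symm h,
    fun h1 h2 => h1.trans h2⟩⟩

/-- The quotient of `A` by `D`-type edges; one of the refined factors. -/
def Q1 (σ : Pack A B C D) : Type u := Quotient σ.sd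

def mk1 (σ : Pack A B C D) (a : A) : σ.Q1 := Quotient.mk σ.sd a

theorem mk1_eq_iff (σ : Pack A B C D) {a a' : A} : σ.mk1 a = σ.mk1 a' ↔ σ.sd.r a a' :=
  ⟨Quotient.exact, Quotient.sound⟩

theorem mk1_surjective (σ : Pack A B C D) (u : σ.Q1) : ∃ a, σ.mk1 a = u :=
  ⟨u.out, Quotient.out_eq u⟩

theorem c_inv (σ : Pack A B C D) {a a' : A} (h : σ.sd.r a a') (b : B) :
    σ.c (a, b) = σ.c (a', b) := by
  induction h with
  | refl => rfl
  | tail _ hlast ih => exact ih.trans (σ.eD_all hlast b)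

/-- The loop graph structure on `Q1`. -/
def P1 (σ : Pack A B C D) : LoopGraph σ.Q1 where
  adj u v := (∃ a a', u = σ.mk1 a ∧ v = σ.mk1 a' ∧ σ.eC a a') ∨
    (u = v ∧ ∃ a, u = σ.mk1 a ∧ σ.GC.adj (σ.c (a, σ.b0)) (σ.c (a, σ.b0)))
  symm u v h := by
    rcases h with ⟨a, a', h1, h2, h3⟩ | ⟨h1, h2⟩
    · exact Or.inl ⟨a', a, h2, h1, σ.eC_symm h3⟩
    · exact Or.inr ⟨h1.symm, h1 ▸ h2⟩

theorem cbar_wd (σ : Pack A B C D) {a a' : A} {b b' : B} (h1 : σ.sd.r a a')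
    (h2 : (S1 σ).sd.r b b') : σ.c (a, b) = σ.c (a', b') := by
  have e1 : σ.c (a, b) = σ.c (a', b) := σ.c_inv h1 b
  have e2 : (S1 σ).c (b, a') = (S1 σ).c (b', a') := (S1 σ).c_inv h2 a'
  exact e1.trans e2

theorem cbar_inj (σ : Pack A B C D) {a a' : A} {b b' : B}
    (h : σ.c (a, b) = σ.c (a', b')) : σ.sd.r a a' ∧ (S1 σ).sd.r b b' := by
  classical
  set cst := σ.c (a, b) with hcst
  have key : ∀ δ : D, σ.sd.r a (σ.ψ.symm (cst, δ)).1 ∧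
      (S1 σ).sd.r b (σ.ψ.symm (cst, δ)).2 → True := fun _ _ => trivial
  have step : ∀ δ1 δ2, σ.GD.N.Adj δ1 δ2 →
      (σ.sd.r a (σ.ψ.symm (cst, δ1)).1 ∧ (S1 σ).sd.r b (σ.ψ.symm (cst, δ1)).2) →
      (σ.sd.r a (σ.ψ.symm (cst, δ2)).1 ∧ (S1 σ).sd.r b (σ.ψ.symm (cst, δ2)).2) := by
    intro δ1 δ2 hδ hP
    have hδ' := N_adj.1 hδ
    set z1 := σ.ψ.symm (cst, δ1) with hz1def
    set z2 := σ.ψ.symm (cst, δ2) with hz2def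
    have hψ1 : σ.ψ z1 = (cst, δ1) := σ.ψ.apply_symm_apply _
    have hψ2 : σ.ψ z2 = (cst, δ2) := σ.ψ.apply_symm_apply _
    have hc1 : σ.c z1 = cst := by rw [c, hψ1]
    have hc2 : σ.c z2 = cst := by rw [c, hψ2]
    have hd1 : σ.d z1 = δ1 := by rw [d, hψ1]
    have hd2 : σ.d z2 = δ2 := by rw [d, hψ2]
    have hadj : (σ.GA.box σ.GB).adj z1 z2 := by
      rw [σ.hψ]
      exact Or.inr ⟨show σ.c z1 = σ.c z2 by rw [hc1, hc2],
        show σ.GD.adj (σ.d z1) (σ.d z2) by rw [hd1, hd2]; exact hδ'.2⟩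
    have hne : z1 ≠ z2 := by
      intro he
      exact hδ'.1 (by rw [← hd1, he, hd2])
    have hceq : σ.c z1 = σ.c z2 := by rw [hc1, hc2]
    rcases σ.ab_of_adj hadj hne with ⟨h1, h2, h3⟩ | ⟨h1, h2, h3⟩
    · -- an A-edge of D-type
      have hceq' : σ.c (z1.1, z1.2) = σ.c (z2.1, z1.2) := by
        have : (z2.1, z1.2) = z2 := by rw [h3]
        rw [this]
        exact hceq
      have heD : σ.eD z1.1 z2.1 := ⟨h2, h1, σ.ceq_transfer h1 h2 hceq'⟩
      exact ⟨hP.1.trans (ReflTransGen.single heD), by rw [← h3]; exact hP.2⟩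
    · -- a B-edge of D-type
      have hceq' : (S1 σ).c (z1.2, z1.1) = (S1 σ).c (z2.2, z1.1) := by
        show σ.c (z1.1, z1.2) = σ.c (z1.1, z2.2)
        have : (z1.1, z2.2) = z2 := by rw [h1]
        rw [this]
        exact hceq
      have heD : (S1 σ).eD z1.2 z2.2 := ⟨h3, h2, (S1 σ).ceq_transfer h2 h3 hceq'⟩
      exact ⟨by rw [← h1]; exact hP.1, hP.2.trans (ReflTransGen.single heD)⟩
  have base : σ.sd.r a (σ.ψ.symm (cst, σ.d (a, b))).1 ∧
      (S1 σ).sd.r b (σ.ψ.symm (cst, σ.d (a, b))).2 := by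
    have : σ.ψ.symm (cst, σ.d (a, b)) = (a, b) := by
      rw [hcst]
      exact σ.ψ.symm_apply_apply (a, b)
    rw [this]
    exact ⟨ReflTransGen.refl, ReflTransGen.refl⟩
  have final := connected_invariant σ.ND_conn
    (P := fun δ => σ.sd.r a (σ.ψ.symm (cst, δ)).1 ∧ (S1 σ).sd.r b (σ.ψ.symm (cst, δ)).2)
    step base (v := σ.d (a', b'))
  have : σ.ψ.symm (cst, σ.d (a', b')) = (a', b') := by
    rw [h]
    exact σ.ψ.symm_apply_apply (a', b')
  simp only [this] at final
  exact final

theorem pair_inj (σ : Pack A B C D) {a a' : A} (h1 : σ.sd.r a a')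
    (h2 : (S2 σ).sd.r a a') : a = a' := by
  have e1 : σ.c (a, σ.b0) = σ.c (a', σ.b0) := σ.c_inv h1 σ.b0
  have e2 : σ.d (a, σ.b0) = σ.d (a', σ.b0) := (S2 σ).c_inv h2 σ.b0
  exact congrArg Prod.fst (σ.eq_of_cd e1 e2)

theorem eC_iff_S2eD (σ : Pack A B C D) {a a' : A} : σ.eC a a' ↔ (S2 σ).eD a a' := by
  constructor
  · rintro ⟨h1, h2, h3⟩
    refine ⟨h1, h2, ?_⟩
    show σ.d (a, σ.b0) = σ.d (a', σ.b0)
    exact (σ.eC_data ⟨h1, h2, h3⟩ σ.b0).2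
  · rintro ⟨h1, h2, h3⟩
    refine ⟨h1, h2, ?_⟩
    intro hc
    have hadj : (σ.GA.box σ.GB).adj (a, σ.b0) (a', σ.b0) := Or.inl ⟨h1, rfl⟩
    have hne : (a, σ.b0) ≠ (a', σ.b0) := fun he => h2 (congrArg Prod.fst he)
    exact hne (σ.eq_of_cd hc h3)

theorem na_rtg (σ : Pack A B C D) (p q : A) :
    ReflTransGen (fun u v => σ.eC u v ∨ σ.eD u v) p q := by
  classical
  have hreach : σ.GA.N.Reachable p q := σ.NA_conn.preconnected p q
  have hrtg := (SimpleGraph.reachable_iff_reflTransGen (G := σ.GA.N) p q).1 hreach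
  refine ReflTransGen.mono ?_ _ _ hrtg
  intro u v huv
  have huv' := N_adj.1 huv
  by_cases hc : σ.c (u, σ.b0) = σ.c (v, σ.b0)
  · exact Or.inr ⟨huv'.2, huv'.1, hc⟩
  · exact Or.inl ⟨huv'.2, huv'.1, hc⟩

theorem pair_surj (σ : Pack A B C D) (p q : A) :
    ∃ a, σ.sd.r p a ∧ (S2 σ).sd.r q a := by
  obtain ⟨a, h1, h2⟩ := rel_sort σ.square σ.eD_symm (σ.na_rtg q p)
  exact ⟨a, h2, ReflTransGen.mono (fun u v h => σ.eC_iff_S2eD.1 h) _ _ h1⟩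

theorem edge_transport (σ : Pack A B C D) {p a q : A} (h : σ.sd.r p a)
    (he : σ.eC p q) : ∃ a', σ.eC a a' ∧ σ.sd.r q a' :=
  rel_transport σ.square σ.eD_symm h he

theorem loop_eq (σ : Pack A B C D) (a : A) (b : B) :
    (σ.GA.adj a a ∨ σ.GB.adj b b) ↔
    (σ.GC.adj (σ.c (a, b)) (σ.c (a, b)) ∨ σ.GD.adj (σ.d (a, b)) (σ.d (a, b))) := by
  have h := σ.hψ (a, b) (a, b)
  simpa [box, c, d] using h

theorem base_noloop (σ : Pack A B C D) :
    ¬σ.GA.adj σ.a0 σ.a0 ∧ ¬σ.GB.adj σ.b0 σ.b0 ∧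
    ¬σ.GC.adj (σ.c (σ.a0, σ.b0)) (σ.c (σ.a0, σ.b0)) ∧
    ¬σ.GD.adj (σ.d (σ.a0, σ.b0)) (σ.d (σ.a0, σ.b0)) := by
  have h1 : ¬(σ.GA.adj σ.a0 σ.a0 ∨ σ.GB.adj σ.b0 σ.b0) := by
    intro h
    exact σ.hul (box_adj_self.2 h)
  have h2 := σ.loop_eq σ.a0 σ.b0
  push_neg at h1
  have h3 : ¬(σ.GC.adj (σ.c (σ.a0, σ.b0)) (σ.c (σ.a0, σ.b0)) ∨
      σ.GD.adj (σ.d (σ.a0, σ.b0)) (σ.d (σ.a0, σ.b0))) := by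
    rw [← h2]
    rintro (h | h)
    · exact h1.1 h
    · exact h1.2 h
  push_neg at h3
  exact ⟨h1.1, h1.2, h3.1, h3.2⟩

end Pack
end LoopGraph
namespace LoopGraph
namespace Pack
open Relation

variable {A B C D : Type u}

theorem sd_symm (σ : Pack A B C D) {a b : A} (h : σ.sd.r a b) : σ.sd.r b a :=
  σ.sd.iseqv.symm h

theorem sd_trans (σ : Pack A B C D) {a b c : A} (h1 : σ.sd.r a b) (h2 : σ.sd.r b c) :
    σ.sd.r a c :=
  σ.sd.iseqv.trans h1 h2

/-- Coherence of loops: a loop in `C` at `c (a, b)` is equivalent to a loop at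
`c (a, b0)` or a loop at `c (a0, b)`. -/
theorem loop_chain (σ : Pack A B C D) (a : A) (b : B) :
    σ.GC.adj (σ.c (a, b)) (σ.c (a, b)) ↔
    (σ.GC.adj (σ.c (a, σ.b0)) (σ.c (a, σ.b0)) ∨
     σ.GC.adj (σ.c (σ.a0, b)) (σ.c (σ.a0, b))) := by
  obtain ⟨a1, ha1, ha2⟩ := σ.pair_surj a σ.a0
  obtain ⟨b1, hb1, hb2⟩ := (S1 σ).pair_surj b σ.b0
  have e1 : σ.c (a1, b1) = σ.c (a, b) := by
    have p1 : σ.c (a, b1) = σ.c (a1, b1) := σ.c_inv ha1 b1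
    have p2 : σ.c (a, b) = σ.c (a, b1) := (S1 σ).c_inv hb1 a
    rw [← p1, ← p2]
  have e2 : σ.d (a1, b1) = σ.d (σ.a0, σ.b0) := by
    have p1 : σ.d (σ.a0, b1) = σ.d (a1, b1) := (S2 σ).c_inv ha2 b1
    have p2 : σ.d (σ.a0, σ.b0) = σ.d (σ.a0, b1) := (S2 (S1 σ)).c_inv hb2 σ.a0
    rw [← p1, ← p2]
  have e3 : σ.c (a1, σ.b0) = σ.c (a, σ.b0) := (σ.c_inv ha1 σ.b0).symm
  have e4 : σ.d (a1, σ.b0) = σ.d (σ.a0, σ.b0) := ((S2 σ).c_inv ha2 σ.b0).symm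
  have e5 : σ.c (σ.a0, b1) = σ.c (σ.a0, b) := ((S1 σ).c_inv hb1 σ.a0).symm
  have e6 : σ.d (σ.a0, b1) = σ.d (σ.a0, σ.b0) := by
    have p2 : σ.d (σ.a0, σ.b0) = σ.d (σ.a0, b1) := (S2 (S1 σ)).c_inv hb2 σ.a0
    rw [← p2]
  have hD0 := σ.base_noloop.2.2.2
  have hB0 := σ.base_noloop.2.1
  have hA0 := σ.base_noloop.1
  have L1 := σ.loop_eq a1 b1
  rw [e1, e2] at L1
  have L2 := σ.loop_eq a1 σ.b0
  rw [e3, e4] at L2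
  have L3 := σ.loop_eq σ.a0 b1
  rw [e5, e6] at L3
  tauto

theorem back_half (σ : Pack A B C D) {a a' : A}
    (h1 : σ.P1.adj (σ.mk1 a) (σ.mk1 a')) (h2 : (S2 σ).sd.r a a') : σ.GA.adj a a' := by
  rcases h1 with ⟨p, q, hu, hv, he⟩ | ⟨huv, p, hu, hC⟩
  · have hap : σ.sd.r a p := σ.mk1_eq_iff.1 hu
    have haq : σ.sd.r a' q := σ.mk1_eq_iff.1 hv
    obtain ⟨aq, hea, hq⟩ := σ.edge_transport (σ.sd_symm hap) he
    have h3 : σ.sd.r a' aq := σ.sd_trans haq hq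
    have h4 : (S2 σ).sd.r a' aq :=
      (S2 σ).sd_trans ((S2 σ).sd_symm h2)
        (ReflTransGen.single (σ.eC_iff_S2eD.1 hea))
    have : a' = aq := σ.pair_inj h3 h4
    rw [this]
    exact hea.1
  · have hap : σ.sd.r a p := σ.mk1_eq_iff.1 hu
    have haa : a = a' := σ.pair_inj (σ.mk1_eq_iff.1 huv) h2
    have hC' : σ.GC.adj (σ.c (a, σ.b0)) (σ.c (a, σ.b0)) := by
      rw [σ.c_inv hap σ.b0]
      exact hC
    have := (σ.loop_eq a σ.b0).2 (Or.inl hC')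
    rcases this with hA | hB
    · rw [← haa]; exact hA
    · exact absurd hB σ.base_noloop.2.1

theorem key_half (σ : Pack A B C D) : σ.GA.IsIsomorphic (σ.P1.box (S2 σ).P1) := by
  have hbij : Function.Bijective (fun a => (σ.mk1 a, (S2 σ).mk1 a)) := by
    constructor
    · intro a a' h
      exact σ.pair_inj (σ.mk1_eq_iff.1 (congrArg Prod.fst h))
        ((S2 σ).mk1_eq_iff.1 (congrArg Prod.snd h))
    · rintro ⟨u, v⟩
      obtain ⟨p, rfl⟩ := σ.mk1_surjective u
      obtain ⟨q, rfl⟩ := (S2 σ).mk1_surjective v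
      obtain ⟨a, h1, h2⟩ := σ.pair_surj p q
      exact ⟨a, Prod.ext (σ.mk1_eq_iff.2 (σ.sd_symm h1))
        ((S2 σ).mk1_eq_iff.2 ((S2 σ).sd_symm h2))⟩
  refine ⟨Equiv.ofBijective _ hbij, fun a a' => ⟨fun h => ?_, fun h => ?_⟩⟩
  · by_cases he : a = a'
    · subst he
      rcases (σ.loop_eq a σ.b0).1 (Or.inl h) with hC | hD
      · exact Or.inl ⟨Or.inr ⟨rfl, a, rfl, hC⟩, rfl⟩
      · exact Or.inr ⟨rfl, Or.inr ⟨rfl, a, rfl, hD⟩⟩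
    · by_cases hc : σ.c (a, σ.b0) = σ.c (a', σ.b0)
      · have heD : σ.eD a a' := ⟨h, he, hc⟩
        exact Or.inr ⟨σ.mk1_eq_iff.2 (ReflTransGen.single heD),
          Or.inl ⟨a, a', rfl, rfl, ⟨h, he, (σ.eD_data heD σ.b0).2⟩⟩⟩
      · have heC : σ.eC a a' := ⟨h, he, hc⟩
        exact Or.inl ⟨Or.inl ⟨a, a', rfl, rfl, heC⟩,
          (S2 σ).mk1_eq_iff.2 (ReflTransGen.single (σ.eC_iff_S2eD.1 heC))⟩
  · rcases h with ⟨h1, h2⟩ | ⟨h2, h1⟩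
    · exact σ.back_half h1 ((S2 σ).mk1_eq_iff.1 h2)
    · exact (S2 σ).back_half h1 (σ.mk1_eq_iff.1 h2)

/-- `cbar` as a map on the product of quotients. -/
def cbar (σ : Pack A B C D) (p : σ.Q1 × (S1 σ).Q1) : C :=
  Quotient.lift₂ (fun a b => σ.c (a, b)) (fun _ _ _ _ h1 h2 => σ.cbar_wd h1 h2) p.1 p.2

theorem cbar_mk (σ : Pack A B C D) (a : A) (b : B) :
    σ.cbar (σ.mk1 a, (S1 σ).mk1 b) = σ.c (a, b) := rfl

theorem cbar_bijective (σ : Pack A B C D) : Function.Bijective σ.cbar := by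
  constructor
  · rintro ⟨u, w⟩ ⟨v, w'⟩ h
    obtain ⟨a, rfl⟩ := σ.mk1_surjective u
    obtain ⟨a', rfl⟩ := σ.mk1_surjective v
    obtain ⟨b, rfl⟩ := (S1 σ).mk1_surjective w
    obtain ⟨b', rfl⟩ := (S1 σ).mk1_surjective w'
    rw [cbar_mk, cbar_mk] at h
    obtain ⟨h1, h2⟩ := σ.cbar_inj h
    exact Prod.ext (σ.mk1_eq_iff.2 h1) ((S1 σ).mk1_eq_iff.2 h2)
  · intro c0
    refine ⟨(σ.mk1 (σ.ψ.symm (c0, σ.d (σ.a0, σ.b0))).1,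
      (S1 σ).mk1 (σ.ψ.symm (c0, σ.d (σ.a0, σ.b0))).2), ?_⟩
    rw [cbar_mk]
    show σ.c (σ.ψ.symm (c0, σ.d (σ.a0, σ.b0))) = c0
    rw [c, σ.ψ.apply_symm_apply]

end Pack
end LoopGraph
namespace LoopGraph
namespace Pack
open Relation

variable {A B C D : Type u}

theorem key_mid_core (σ : Pack A B C D) (a a' : A) (b b' : B) :
    (σ.P1.box (S1 σ).P1).adj (σ.mk1 a, (S1 σ).mk1 b) (σ.mk1 a', (S1 σ).mk1 b') ↔
    σ.GC.adj (σ.c (a, b)) (σ.c (a', b')) := by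
  constructor
  · rintro (⟨hP, hw⟩ | ⟨hu, hQ⟩)
    · have hbb : (S1 σ).sd.r b b' := (S1 σ).mk1_eq_iff.1 hw
      have hb' : σ.c (a', b) = σ.c (a', b') := (S1 σ).c_inv hbb a'
      rcases hP with ⟨p, q, hu', hv', he⟩ | ⟨huv, p, hu', hC⟩
      · have hap : σ.sd.r a p := σ.mk1_eq_iff.1 hu'
        have haq : σ.sd.r a' q := σ.mk1_eq_iff.1 hv'
        obtain ⟨aq, hea, hq⟩ := σ.edge_transport (σ.sd_symm hap) he
        have haaq : σ.sd.r a' aq := σ.sd_trans haq hq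
        have hcc : σ.GC.adj (σ.c (a, b)) (σ.c (aq, b)) := (σ.eC_data hea b).1
        rw [← hb', σ.c_inv haaq b]
        exact hcc
      · have haa : σ.sd.r a a' := σ.mk1_eq_iff.1 huv
        have hap : σ.sd.r a p := σ.mk1_eq_iff.1 hu'
        have hC' : σ.GC.adj (σ.c (a, σ.b0)) (σ.c (a, σ.b0)) := by
          rw [σ.c_inv hap σ.b0]; exact hC
        have hloop : σ.GC.adj (σ.c (a, b)) (σ.c (a, b)) :=
          (σ.loop_chain a b).2 (Or.inl hC')
        have : σ.c (a, b) = σ.c (a', b') := σ.cbar_wd haa hbb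
        rw [← this]
        exact hloop
    · have haa : σ.sd.r a a' := σ.mk1_eq_iff.1 hu
      have ha' : σ.c (a, b') = σ.c (a', b') := σ.c_inv haa b'
      rcases hQ with ⟨p, q, hu', hv', he⟩ | ⟨huv, p, hu', hC⟩
      · have hbp : (S1 σ).sd.r b p := (S1 σ).mk1_eq_iff.1 hu'
        have hbq : (S1 σ).sd.r b' q := (S1 σ).mk1_eq_iff.1 hv'
        obtain ⟨bq, heb, hq⟩ := (S1 σ).edge_transport ((S1 σ).sd_symm hbp) he
        have hbbq : (S1 σ).sd.r b' bq := (S1 σ).sd_trans hbq hq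
        have hcc : σ.GC.adj (σ.c (a, b)) (σ.c (a, bq)) := ((S1 σ).eC_data heb a).1
        have : σ.c (a', b') = σ.c (a, bq) := σ.cbar_wd (σ.sd_symm haa) hbbq
        rw [this]
        exact hcc
      · have hbb : (S1 σ).sd.r b b' := (S1 σ).mk1_eq_iff.1 huv
        have hbp : (S1 σ).sd.r b p := (S1 σ).mk1_eq_iff.1 hu'
        have hC' : σ.GC.adj (σ.c (σ.a0, b)) (σ.c (σ.a0, b)) := by
          have : σ.c (σ.a0, b) = σ.c (σ.a0, p) := (S1 σ).c_inv hbp σ.a0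
          rw [this]; exact hC
        have hloop : σ.GC.adj (σ.c (a, b)) (σ.c (a, b)) :=
          (σ.loop_chain a b).2 (Or.inr hC')
        have : σ.c (a, b) = σ.c (a', b') := σ.cbar_wd haa hbb
        rw [← this]
        exact hloop
  · intro hadj
    by_cases hcc : σ.c (a, b) = σ.c (a', b')
    · obtain ⟨h1, h2⟩ := σ.cbar_inj hcc
      rw [← hcc] at hadj
      rcases (σ.loop_chain a b).1 hadj with hC | hC
      · exact Or.inl ⟨Or.inr ⟨σ.mk1_eq_iff.2 h1, a, rfl, hC⟩, (S1 σ).mk1_eq_iff.2 h2⟩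
      · exact Or.inr ⟨σ.mk1_eq_iff.2 h1, Or.inr ⟨(S1 σ).mk1_eq_iff.2 h2, b, rfl, hC⟩⟩
    · set z1 := σ.ψ.symm (σ.c (a, b), σ.d (σ.a0, σ.b0)) with hz1def
      set z2 := σ.ψ.symm (σ.c (a', b'), σ.d (σ.a0, σ.b0)) with hz2def
      have hψ1 : σ.ψ z1 = (σ.c (a, b), σ.d (σ.a0, σ.b0)) := σ.ψ.apply_symm_apply _
      have hψ2 : σ.ψ z2 = (σ.c (a', b'), σ.d (σ.a0, σ.b0)) := σ.ψ.apply_symm_apply _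
      have hc1 : σ.c z1 = σ.c (a, b) := by rw [c, hψ1]
      have hc2 : σ.c z2 = σ.c (a', b') := by rw [c, hψ2]
      have hd1 : σ.d z1 = σ.d (σ.a0, σ.b0) := by rw [d, hψ1]
      have hd2 : σ.d z2 = σ.d (σ.a0, σ.b0) := by rw [d, hψ2]
      have hadjz : (σ.GA.box σ.GB).adj z1 z2 := by
        rw [σ.hψ]
        exact Or.inl ⟨show σ.GC.adj (σ.c z1) (σ.c z2) by rw [hc1, hc2]; exact hadj,
          show σ.d z1 = σ.d z2 by rw [hd1, hd2]⟩
      have hnez : z1 ≠ z2 := by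
        intro he
        exact hcc (by rw [← hc1, he, hc2])
      have hne12 : σ.c z1 ≠ σ.c z2 := by rw [hc1, hc2]; exact hcc
      have r1 : σ.sd.r a z1.1 ∧ (S1 σ).sd.r b z1.2 := σ.cbar_inj (hc1.symm)
      have r2 : σ.sd.r a' z2.1 ∧ (S1 σ).sd.r b' z2.2 := σ.cbar_inj (hc2.symm)
      rcases σ.ab_of_adj hadjz hnez with ⟨h1, h2, h3⟩ | ⟨h1, h2, h3⟩
      · have hcz : σ.c (z1.1, z1.2) ≠ σ.c (z2.1, z1.2) := by
          have e2 : (z2.1, z1.2) = z2 := by rw [h3]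
          rw [e2]
          exact hne12
        have heC : σ.eC z1.1 z2.1 := ⟨h2, h1, σ.ctransfer h1 h2 hcz⟩
        refine Or.inl ⟨Or.inl ⟨z1.1, z2.1, σ.mk1_eq_iff.2 r1.1, σ.mk1_eq_iff.2 r2.1, heC⟩, ?_⟩
        have : (S1 σ).sd.r b b' := by
          refine (S1 σ).sd_trans r1.2 ((S1 σ).sd_symm ?_)
          rw [← h3] at r2
          exact r2.2
        exact (S1 σ).mk1_eq_iff.2 this
      · have hcz : (S1 σ).c (z1.2, z1.1) ≠ (S1 σ).c (z2.2, z1.1) := by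
          show σ.c (z1.1, z1.2) ≠ σ.c (z1.1, z2.2)
          have e2 : (z1.1, z2.2) = z2 := by rw [h1]
          rw [e2]
          exact hne12
        have heC : (S1 σ).eC z1.2 z2.2 := ⟨h3, h2, (S1 σ).ctransfer h2 h3 hcz⟩
        refine Or.inr ⟨?_, Or.inl ⟨z1.2, z2.2, (S1 σ).mk1_eq_iff.2 r1.2,
          (S1 σ).mk1_eq_iff.2 r2.2, heC⟩⟩
        have : σ.sd.r a a' := by
          refine σ.sd_trans r1.1 (σ.sd_symm ?_)
          rw [← h1] at r2
          exact r2.1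
        exact σ.mk1_eq_iff.2 this

theorem key_mid (σ : Pack A B C D) : σ.GC.IsIsomorphic (σ.P1.box (S1 σ).P1) := by
  refine IsIsomorphic.symm ⟨Equiv.ofBijective σ.cbar σ.cbar_bijective, fun p q => ?_⟩
  obtain ⟨u, w⟩ := p
  obtain ⟨v, w'⟩ := q
  obtain ⟨a, rfl⟩ := σ.mk1_surjective u
  obtain ⟨a', rfl⟩ := σ.mk1_surjective v
  obtain ⟨b, rfl⟩ := (S1 σ).mk1_surjective w
  obtain ⟨b', rfl⟩ := (S1 σ).mk1_surjective w'
  exact σ.key_mid_core a a' b b'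

end Pack
end LoopGraph
namespace LoopGraph
open Relation

/-- THE KEY LEMMA: common refinement of two box-product structures on a
connected graph with loops having an unlooped vertex. -/
theorem key_main {A B C D : Type u} [Finite A] [Finite B]
    (GA : LoopGraph A) (GB : LoopGraph B) (GC : LoopGraph C) (GD : LoopGraph D)
    (hconn : (GA.box GB).N.Connected)
    (hul : ∃ o : A × B, ¬ (GA.box GB).adj o o)
    (ψ : A × B ≃ C × D)
    (hψ : ∀ x y, (GA.box GB).adj x y ↔ (GC.box GD).adj (ψ x) (ψ y)) :
    ∃ (A1 A2 B1 B2 : Type u) (P1 : LoopGraph A1) (P2 : LoopGraph A2)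
      (Q1 : LoopGraph B1) (Q2 : LoopGraph B2),
      (Finite A1 ∧ Finite A2 ∧ Finite B1 ∧ Finite B2) ∧
      GA.IsIsomorphic (P1.box P2) ∧ GB.IsIsomorphic (Q1.box Q2) ∧
      GC.IsIsomorphic (P1.box Q1) ∧ GD.IsIsomorphic (P2.box Q2) := by
  obtain ⟨⟨oa, ob⟩, ho⟩ := hul
  let σ : Pack A B C D :=
    { GA := GA, GB := GB, GC := GC, GD := GD, ψ := ψ, a0 := oa, b0 := ob,
      hψ := hψ, hul := ho, hconn := hconn }
  refine ⟨σ.Q1, (Pack.S2 σ).Q1, (Pack.S1 σ).Q1, (Pack.S2 (Pack.S1 σ)).Q1,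
    σ.P1, (Pack.S2 σ).P1, (Pack.S1 σ).P1, (Pack.S2 (Pack.S1 σ)).P1,
    ⟨Quotient.finite _, Quotient.finite _, Quotient.finite _, Quotient.finite _⟩,
    σ.key_half, (Pack.S1 σ).key_half, σ.key_mid, ?_⟩
  exact (Pack.S2 σ).key_mid

end LoopGraph
namespace LoopGraph

/-- Adjacency in `boxPi` over `Fin (k+1)` splits into head and tail. -/
theorem boxPi_succ_adj {k : ℕ} {V : Fin (k + 1) → Type u} (G : ∀ i, LoopGraph (V i))
    (x y : ∀ i, V i) :
    (boxPi G).adj x y ↔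
      ((G 0).adj (x 0) (y 0) ∧ ∀ i : Fin k, x i.succ = y i.succ) ∨
      (x 0 = y 0 ∧ (boxPi (fun i : Fin k => G i.succ)).adj
        (fun i => x i.succ) (fun i => y i.succ)) := by
  constructor
  · rintro ⟨i, hi, hj⟩
    refine Fin.cases ?_ ?_ i hi hj
    · intro hi hj
      exact Or.inl ⟨hi, fun j => hj j.succ (Fin.succ_ne_zero j)⟩
    · intro i' hi hj
      refine Or.inr ⟨hj 0 (Fin.succ_ne_zero i').symm, i', hi, fun j hjj => ?_⟩
      exact hj j.succ (fun he => hjj (Fin.succ_injective _ he))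
  · rintro (⟨h1, h2⟩ | ⟨h1, i, hi, hjt⟩)
    · refine ⟨0, h1, fun j hj => ?_⟩
      rcases Fin.eq_zero_or_eq_succ j with rfl | ⟨j', rfl⟩
      · exact absurd rfl hj
      · exact h2 j'
    · refine ⟨i.succ, hi, fun j hj => ?_⟩
      rcases Fin.eq_zero_or_eq_succ j with rfl | ⟨j', rfl⟩
      · exact h1
      · exact hjt j' (fun he => hj (by rw [he]))

/-- `boxPi` over `Fin (k+1)` is the box product of the head with the tail. -/
theorem boxPi_succ {k : ℕ} {V : Fin (k + 1) → Type u} (G : ∀ i, LoopGraph (V i)) :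
    (boxPi G).IsIsomorphic ((G 0).box (boxPi (fun i : Fin k => G i.succ))) := by
  refine ⟨(Fin.consEquiv V).symm, fun x y => ?_⟩
  rw [boxPi_succ_adj]
  constructor
  · rintro (⟨h1, h2⟩ | ⟨h1, h2⟩)
    · exact Or.inl ⟨h1, funext h2⟩
    · exact Or.inr ⟨h1, h2⟩
  · rintro (⟨h1, h2⟩ | ⟨h1, h2⟩)
    · exact Or.inl ⟨h1, fun i => congrFun h2 i⟩
    · exact Or.inr ⟨h1, h2⟩

/-- `boxPi` over `Fin 0` is trivial. -/
theorem boxPi_zero_trivial {V : Fin 0 → Type u} (G : ∀ i, LoopGraph (V i)) :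
    (boxPi G).IsTrivial := by
  refine ⟨⟨fun i => i.elim0, fun w => funext fun i => i.elim0⟩, fun v h => ?_⟩
  obtain ⟨i, _, _⟩ := h
  exact i.elim0

/-- `boxPi` over `Fin 1` is isomorphic to the unique factor. -/
theorem boxPi_one {V : Fin 1 → Type u} (G : ∀ i, LoopGraph (V i)) :
    (boxPi G).IsIsomorphic (G 0) :=
  (boxPi_succ G).trans (box_trivial_right (boxPi_zero_trivial _))

theorem box_assoc {X Y Z : Type u} (GX : LoopGraph X) (GY : LoopGraph Y)
    (GZ : LoopGraph Z) : ((GX.box GY).box GZ).IsIsomorphic (GX.box (GY.box GZ)) := by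
  refine ⟨Equiv.prodAssoc X Y Z, fun u v => ?_⟩
  obtain ⟨⟨ux, uy⟩, uz⟩ := u
  obtain ⟨⟨vx, vy⟩, vz⟩ := v
  simp only [box, Equiv.prodAssoc_apply, Prod.mk.injEq]
  tauto

/-- `Fin.cons` on a type family. -/
def consT {m : ℕ} (XT : Type u) (U : Fin m → Type u) : Fin (m + 1) → Type u :=
  Fin.cons (α := fun _ => Type u) XT U

/-- The `Fin.cons` of a loop graph and a family of loop graphs. -/
def consFam {XT : Type u} (X : LoopGraph XT) {m : ℕ} {U : Fin m → Type u}
    (F : ∀ i, LoopGraph (U i)) : ∀ i : Fin (m + 1), LoopGraph (consT XT U i) :=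
  Fin.cons (α := fun i => LoopGraph (consT XT U i)) X F

theorem consFam_zero {XT : Type u} (X : LoopGraph XT) {m : ℕ} {U : Fin m → Type u}
    (F : ∀ i, LoopGraph (U i)) : consFam X F 0 = X := rfl

theorem consFam_succ {XT : Type u} (X : LoopGraph XT) {m : ℕ} {U : Fin m → Type u}
    (F : ∀ i, LoopGraph (U i)) (i : Fin m) : consFam X F i.succ = F i := rfl

/-- Attaching one factor to a `boxPi` gives a `boxPi` over `Fin (m+1)` via `Fin.cons`. -/
theorem box_boxPi_cons {XT : Type u} (X : LoopGraph XT) {m : ℕ} {U : Fin m → Type u}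
    (F : ∀ i, LoopGraph (U i)) :
    (X.box (boxPi F)).IsIsomorphic (boxPi (consFam X F)) :=
  (boxPi_succ (consFam X F)).symm

theorem boxPi_connected {k : ℕ} {V : Fin k → Type u} (G : ∀ i, LoopGraph (V i))
    (h : ∀ i, (G i).N.Connected) : (boxPi G).N.Connected := by
  induction k with
  | zero =>
    haveI : Nonempty (∀ i : Fin 0, V i) := ⟨fun i => i.elim0⟩
    constructor
    intro u v
    have : u = v := funext fun i => i.elim0
    rw [this]
  | succ k ih =>
    obtain ⟨φ, hφ⟩ := boxPi_succ G
    have hc : ((G 0).box (boxPi fun i : Fin k => G i.succ)).N.Connected :=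
      box_connected_iff.2 ⟨h 0, ih _ (fun i => h i.succ)⟩
    exact (SimpleGraph.Iso.connected_iff (nIso φ hφ)).2 hc

theorem boxPi_adj_self {k : ℕ} {V : Fin k → Type u} (G : ∀ i, LoopGraph (V i))
    (x : ∀ i, V i) : (boxPi G).adj x x ↔ ∃ i, (G i).adj (x i) (x i) := by
  constructor
  · rintro ⟨i, hi, _⟩; exact ⟨i, hi⟩
  · rintro ⟨i, hi⟩; exact ⟨i, hi, fun _ _ => rfl⟩

theorem boxPi_unlooped {k : ℕ} {V : Fin k → Type u} (G : ∀ i, LoopGraph (V i))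
    (h : ∀ i, ∃ v, ¬(G i).adj v v) : ∃ x, ¬(boxPi G).adj x x := by
  classical
  choose f hf using h
  refine ⟨f, fun hx => ?_⟩
  obtain ⟨i, hi⟩ := (boxPi_adj_self G f).1 hx
  exact hf i hi

theorem unlooped_of_iso {X Y : Type u} {GX : LoopGraph X} {GY : LoopGraph Y}
    (h : GX.IsIsomorphic GY) (hu : ∃ v, ¬GX.adj v v) : ∃ w, ¬GY.adj w w := by
  obtain ⟨φ, hφ⟩ := h
  obtain ⟨v, hv⟩ := hu
  exact ⟨φ v, fun hh => hv ((hφ v v).2 hh)⟩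

theorem box_unlooped {X Y : Type u} {GX : LoopGraph X} {GY : LoopGraph Y}
    (h : ∃ o, ¬(GX.box GY).adj o o) :
    (∃ v, ¬GX.adj v v) ∧ (∃ w, ¬GY.adj w w) := by
  obtain ⟨⟨v, w⟩, hvw⟩ := h
  rw [box_adj_self] at hvw
  push_neg at hvw
  exact ⟨⟨v, hvw.1⟩, ⟨w, hvw.2⟩⟩

theorem card_eq_of_iso {X Y : Type u} {GX : LoopGraph X} {GY : LoopGraph Y}
    (h : GX.IsIsomorphic GY) : Nat.card X = Nat.card Y := by
  obtain ⟨φ, _⟩ := h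
  exact Nat.card_congr φ

theorem nontrivial_of_irred {X : Type u} {GX : LoopGraph X} (h : GX.Irreducible) :
    ¬GX.IsTrivial := h.1

/-- Splitting a reducible graph. -/
theorem split_of_not_irred {X : Type u} {GX : LoopGraph X} (hnt : ¬GX.IsTrivial)
    (hconn : GX.N.Connected) (hul : ∃ v, ¬GX.adj v v) (hni : ¬GX.Irreducible) :
    ∃ (W L : Type u) (H : LoopGraph W) (K : LoopGraph L),
      GX.IsIsomorphic (H.box K) ∧ ¬H.IsTrivial ∧ ¬K.IsTrivial := by
  classical
  rw [Irreducible] at hni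
  by_contra hcon
  apply hni
  refine ⟨hnt, hconn, hul, fun W L H K hiso => ?_⟩
  by_contra hd
  exact hcon ⟨W, L, H, K, hiso, fun h => hd (Or.inl h), fun h => hd (Or.inr h)⟩

end LoopGraph
namespace LoopGraph

theorem two_le_card {X : Type u} [Finite X] {GX : LoopGraph X} (hconn : GX.N.Connected)
    (hul : ∃ v, ¬GX.adj v v) (hnt : ¬GX.IsTrivial) : 2 ≤ Nat.card X := by
  obtain ⟨v, hv⟩ := hul
  have hne : Nonempty X := hconn.nonempty
  by_contra hlt
  push_neg at hlt
  interval_cases hcard : Nat.card X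
  · exact (Nat.card_pos (α := X)).ne' hcard
  · have := Nat.card_eq_one_iff_unique.1 hcard
    have hsub : Subsingleton X := this.1
    refine hnt ⟨⟨v, fun w => Subsingleton.elim w v⟩, fun u hu => ?_⟩
    have : u = v := Subsingleton.elim u v
    rw [this] at hu
    exact hv hu

theorem irred_two_le {X : Type u} [Finite X] {GX : LoopGraph X} (h : GX.Irreducible) :
    2 ≤ Nat.card X :=
  two_le_card h.2.1 h.2.2.1 h.1

/-- Accumulating factorization into irreducibles. -/
theorem accumulate : ∀ (n : ℕ) (X : Type u) (GX : LoopGraph X), Finite X →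
    Nat.card X ≤ n → GX.N.Connected → (∃ v, ¬GX.adj v v) →
    ∀ {m : ℕ} (U : Fin m → Type u) (F : ∀ i, LoopGraph (U i)),
      (∀ i, Finite (U i)) → (∀ i, (F i).Irreducible) →
      ∃ (m' : ℕ) (U' : Fin m' → Type u) (F' : ∀ i, LoopGraph (U' i)),
        (∀ i, Finite (U' i)) ∧ (∀ i, (F' i).Irreducible) ∧
        (GX.box (boxPi F)).IsIsomorphic (boxPi F') := by
  intro n
  induction n using Nat.strong_induction_on with
  | _ n ih =>
    intro X GX hfin hcard hconn hul m U F hUfin hFirr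
    by_cases htriv : GX.IsTrivial
    · exact ⟨m, U, F, hUfin, hFirr, box_trivial_left htriv⟩
    by_cases hirr : GX.Irreducible
    · refine ⟨m + 1, consT X U, consFam GX F, ?_, ?_, box_boxPi_cons GX F⟩
      · intro i
        rcases Fin.eq_zero_or_eq_succ i with rfl | ⟨j, rfl⟩
        · exact hfin
        · exact hUfin j
      · intro i
        rcases Fin.eq_zero_or_eq_succ i with rfl | ⟨j, rfl⟩
        · exact hirr
        · exact hFirr j
    · obtain ⟨W, L, HH, K, hiso, hHnt, hKnt⟩ := split_of_not_irred htriv hconn hul hirr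
      have hWL : (HH.box K).N.Connected := by
        obtain ⟨φ, hφ⟩ := hiso
        exact connected_of_iso φ hφ hconn
      have hHconn := (box_connected_iff.1 hWL).1
      have hKconn := (box_connected_iff.1 hWL).2
      obtain ⟨hHul, hKul⟩ := box_unlooped (unlooped_of_iso hiso hul)
      haveI hWne : Nonempty W := hHconn.nonempty
      haveI hLne : Nonempty L := hKconn.nonempty
      haveI hfinWL : Finite (W × L) := by
        obtain ⟨φ, _⟩ := hiso
        exact Finite.of_equiv X φ
      haveI hWfin : Finite W := Finite.prod_left L
      haveI hLfin : Finite L := Finite.prod_right W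
      have hcards : Nat.card X = Nat.card W * Nat.card L := by
        obtain ⟨φ, _⟩ := hiso
        rw [Nat.card_congr φ, Nat.card_prod]
      have hW2 : 2 ≤ Nat.card W := two_le_card hHconn hHul hHnt
      have hL2 : 2 ≤ Nat.card L := two_le_card hKconn hKul hKnt
      have hWlt : Nat.card W < n := by
        have : Nat.card W < Nat.card X := by nlinarith [Nat.card_pos (α := W)]
        omega
      have hLlt : Nat.card L < n := by
        have : Nat.card L < Nat.card X := by nlinarith [Nat.card_pos (α := L)]
        omega
      obtain ⟨m2, U2, F2, hU2fin, hF2irr, hisoK⟩ :=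
        ih (Nat.card L) hLlt L K hLfin le_rfl hKconn hKul U F hUfin hFirr
      obtain ⟨m3, U3, F3, hU3fin, hF3irr, hisoH⟩ :=
        ih (Nat.card W) hWlt W HH hWfin le_rfl hHconn hHul U2 F2 hU2fin hF2irr
      refine ⟨m3, U3, F3, hU3fin, hF3irr, ?_⟩
      exact (((hiso.box_congr (iso_refl _)).trans (box_assoc HH K (boxPi F))).trans
        ((iso_refl HH).box_congr hisoK)).trans hisoH

/-- Every finite connected graph with loops having an unlooped vertex is a
product of irreducibles. -/
theorem exists_factorization (X : Type u) (GX : LoopGraph X) [Finite X]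
    (hconn : GX.N.Connected) (hul : ∃ v, ¬GX.adj v v) :
    ∃ (m : ℕ) (U : Fin m → Type u) (F : ∀ i, LoopGraph (U i)),
      (∀ i, Finite (U i)) ∧ (∀ i, (F i).Irreducible) ∧ GX.IsIsomorphic (boxPi F) := by
  obtain ⟨m', U', F', h1, h2, h3⟩ := accumulate (Nat.card X) X GX ‹_› le_rfl hconn hul
    (fun i : Fin 0 => i.elim0) (fun i => i.elim0) (fun i => i.elim0) (fun i => i.elim0)
  exact ⟨m', U', F', h1, h2,
    ((box_trivial_right (boxPi_zero_trivial _)).symm.trans h3)⟩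

/-- A factor of a trivial product is trivial. -/
theorem trivial_factor {l : ℕ} {W : Fin l → Type u} (H : ∀ j, LoopGraph (W j))
    (hWne : ∀ j, Nonempty (W j)) (htriv : (boxPi H).IsTrivial) (j0 : Fin l) :
    (H j0).IsTrivial := by
  classical
  obtain ⟨⟨p, hp⟩, hloop⟩ := htriv
  constructor
  · refine ⟨p j0, fun x => ?_⟩
    have h1 := hp (Function.update p j0 x)
    have h2 := congrFun h1 j0
    simpa using h2
  · intro v hv
    apply hloop (Function.update p j0 v)
    refine (boxPi_adj_self H _).2 ⟨j0, ?_⟩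
    simpa using hv

end LoopGraph
namespace LoopGraph

theorem master : ∀ (n : ℕ) {k l : ℕ} {V : Fin k → Type u} {W : Fin l → Type u}
    (G : ∀ i, LoopGraph (V i)) (H : ∀ j, LoopGraph (W j)),
    (∀ i, Finite (V i)) → (∀ j, Finite (W j)) →
    (∀ i, (G i).Irreducible) → (∀ j, (H j).Irreducible) →
    (boxPi G).IsIsomorphic (boxPi H) → Nat.card (∀ i, V i) ≤ n →
    k = l ∧ ∃ π : Fin k ≃ Fin l, ∀ i, (G i).IsIsomorphic (H (π i)) := by
  intro n
  induction n using Nat.strong_induction_on with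
  | _ n ih =>
    intro k l V W G H hVfin hWfin hGirr hHirr hiso hcard
    classical
    haveI : ∀ i, Finite (V i) := hVfin
    haveI : ∀ j, Finite (W j) := hWfin
    have hVne : ∀ i, Nonempty (V i) := fun i => (hGirr i).2.1.nonempty
    have hWne : ∀ j, Nonempty (W j) := fun j => (hHirr j).2.1.nonempty
    rcases Nat.eq_zero_or_pos k with rfl | hk
    · -- k = 0
      have htrivH : (boxPi H).IsTrivial := hiso.isTrivial (boxPi_zero_trivial G)
      have hl : l = 0 := by
        by_contra hl0
        exact (hHirr ⟨0, Nat.pos_of_ne_zero hl0⟩).1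
          (trivial_factor H hWne htrivH ⟨0, Nat.pos_of_ne_zero hl0⟩)
      subst hl
      exact ⟨rfl, Equiv.refl _, fun i => i.elim0⟩
    rcases Nat.eq_zero_or_pos l with rfl | hl
    · -- l = 0, k > 0 : contradiction
      have htrivG : (boxPi G).IsTrivial := hiso.symm.isTrivial (boxPi_zero_trivial H)
      exact absurd (trivial_factor G hVne htrivG ⟨0, hk⟩) (hGirr ⟨0, hk⟩).1
    obtain ⟨k', rfl⟩ := Nat.exists_eq_succ_of_ne_zero (Nat.pos_iff_ne_zero.1 hk)
    obtain ⟨l', rfl⟩ := Nat.exists_eq_succ_of_ne_zero (Nat.pos_iff_ne_zero.1 hl)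
    -- split off the head factors
    have hsplitG := boxPi_succ G
    have hsplitH := boxPi_succ H
    have hisoRS : ((G 0).box (boxPi fun i : Fin k' => G i.succ)).IsIsomorphic
        ((H 0).box (boxPi fun j : Fin l' => H j.succ)) :=
      (hsplitG.symm.trans hiso).trans hsplitH
    have hconnG0R : ((G 0).box (boxPi fun i : Fin k' => G i.succ)).N.Connected := by
      obtain ⟨φ, hφ⟩ := hsplitG
      exact connected_of_iso φ hφ (boxPi_connected G (fun i => (hGirr i).2.1))
    have hulG0R : ∃ o, ¬((G 0).box (boxPi fun i : Fin k' => G i.succ)).adj o o :=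
      unlooped_of_iso hsplitG (boxPi_unlooped G (fun i => (hGirr i).2.2.1))
    obtain ⟨ψ, hψ⟩ := hisoRS
    haveI : ∀ i : Fin k', Finite (V i.succ) := fun i => hVfin i.succ
    haveI : ∀ j : Fin l', Finite (W j.succ) := fun j => hWfin j.succ
    haveI : Nonempty (∀ i : Fin k', V i.succ) := Classical.nonempty_pi.2 fun i => hVne i.succ
    haveI : Nonempty (∀ j : Fin l', W j.succ) := Classical.nonempty_pi.2 fun j => hWne j.succ
    obtain ⟨A1, A2, B1, B2, P1, P2, Q1, Q2, ⟨hfA1, hfA2, hfB1, hfB2⟩, hGA, hGB, hGC, hGD⟩ :=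
      key_main (G 0) (boxPi fun i : Fin k' => G i.succ) (H 0)
        (boxPi fun j : Fin l' => H j.succ) hconnG0R hulG0R ψ hψ
    have hGalt := (hGirr 0).2.2.2 _ _ P1 P2 hGA
    have hHalt := (hHirr 0).2.2.2 _ _ P1 Q1 hGC
    -- cardinalities
    have hsc : Nat.card (∀ i : Fin (k' + 1), V i) =
        Nat.card (V 0) * Nat.card (∀ i : Fin k', V i.succ) := by
      rw [Nat.card_congr (Fin.consEquiv V).symm, Nat.card_prod]
    have h2V : 2 ≤ Nat.card (V 0) := irred_two_le (hGirr 0)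
    have hposR : 0 < Nat.card (∀ i : Fin k', V i.succ) := Nat.card_pos
    have hcR : Nat.card (∀ i : Fin k', V i.succ) < n := by
      have : Nat.card (∀ i : Fin k', V i.succ) < Nat.card (∀ i : Fin (k' + 1), V i) := by
        rw [hsc]; nlinarith
      have hb : Nat.card (∀ i : Fin (k' + 1), V i) ≤ n := hcard
      omega
    have hscW : Nat.card (∀ j : Fin (l' + 1), W j) =
        Nat.card (W 0) * Nat.card (∀ j : Fin l', W j.succ) := by
      rw [Nat.card_congr (Fin.consEquiv W).symm, Nat.card_prod]
    have h2W : 2 ≤ Nat.card (W 0) := irred_two_le (hHirr 0)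
    have hposS : 0 < Nat.card (∀ j : Fin l', W j.succ) := Nat.card_pos
    have hVW : Nat.card (∀ i : Fin (k' + 1), V i) = Nat.card (∀ j : Fin (l' + 1), W j) :=
      card_eq_of_iso hiso
    have hcS : Nat.card (∀ j : Fin l', W j.succ) < n := by
      have : Nat.card (∀ j : Fin l', W j.succ) < Nat.card (∀ j : Fin (l' + 1), W j) := by
        rw [hscW]; nlinarith
      have hb : Nat.card (∀ i : Fin (k' + 1), V i) ≤ n := hcard
      omega
    by_cases hP2 : P2.IsTrivial
    · by_cases hQ1 : Q1.IsTrivial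
      · -- matched case : G 0 ≅ H 0 and tails isomorphic
        have hG0H0 : (G 0).IsIsomorphic (H 0) :=
          (hGA.trans (box_trivial_right hP2)).trans
            ((hGC.trans (box_trivial_right hQ1)).symm)
        have hRS : (boxPi fun i : Fin k' => G i.succ).IsIsomorphic
            (boxPi fun j : Fin l' => H j.succ) :=
          (hGB.trans (box_trivial_left hQ1)).trans
            ((hGD.trans (box_trivial_left hP2)).symm)
        obtain ⟨hkl', π', hπ'⟩ := ih _ hcR (fun i => G i.succ) (fun j => H j.succ)
          (fun i => hVfin _) (fun j => hWfin _) (fun i => hGirr _) (fun j => hHirr _)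
          hRS le_rfl
        subst hkl'
        refine ⟨rfl, (finSuccEquiv k').trans
          ((Equiv.optionCongr π').trans (finSuccEquiv k').symm), fun i => ?_⟩
        rcases Fin.eq_zero_or_eq_succ i with rfl | ⟨i', rfl⟩
        · have hπ0 : ((finSuccEquiv k').trans
              ((Equiv.optionCongr π').trans (finSuccEquiv k').symm)) 0 = 0 := by simp
          rw [hπ0]
          exact hG0H0
        · have hπs : ((finSuccEquiv k').trans
              ((Equiv.optionCongr π').trans (finSuccEquiv k').symm)) i'.succ
              = (π' i').succ := by simp
          rw [hπs]
          exact hπ' i'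
      · -- P2 trivial, Q1 nontrivial : P1 trivial, contradiction
        have hP1 : P1.IsTrivial := hHalt.resolve_right hQ1
        exact absurd (hGA.symm.isTrivial (hP1.box hP2)) (hGirr 0).1
    · -- P2 nontrivial : P1 trivial, swap case
      have hP1 : P1.IsTrivial := hGalt.resolve_right hP2
      have hG0P2 : (G 0).IsIsomorphic P2 := hGA.trans (box_trivial_left hP1)
      have hH0Q1 : (H 0).IsIsomorphic Q1 := hGC.trans (box_trivial_left hP1)
      have hRways : (boxPi fun i : Fin k' => G i.succ).IsIsomorphic ((H 0).box Q2) :=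
        hGB.trans (hH0Q1.symm.box_congr (iso_refl Q2))
      have hSways : (boxPi fun j : Fin l' => H j.succ).IsIsomorphic ((G 0).box Q2) :=
        hGD.trans (hG0P2.symm.box_congr (iso_refl Q2))
      have hQ2conn : Q2.N.Connected := by
        have hRconn : (boxPi fun i : Fin k' => G i.succ).N.Connected :=
          boxPi_connected _ (fun i => (hGirr i.succ).2.1)
        obtain ⟨φ, hφ⟩ := hGB
        exact (box_connected_iff.1 (connected_of_iso φ hφ hRconn)).2
      have hQ2ul : ∃ v, ¬Q2.adj v v := by
        have hRul := boxPi_unlooped (fun i : Fin k' => G i.succ)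
          (fun i => (hGirr i.succ).2.2.1)
        exact (box_unlooped (unlooped_of_iso hGB hRul)).2
      haveI : Finite B2 := hfB2
      obtain ⟨m, UE, E, hEfin, hEirr, hQ2fac⟩ := exists_factorization _ Q2 hQ2conn hQ2ul
      have hRfac : (boxPi fun i : Fin k' => G i.succ).IsIsomorphic
          (boxPi (consFam (H 0) E)) :=
        (hRways.trans ((iso_refl (H 0)).box_congr hQ2fac)).trans (box_boxPi_cons (H 0) E)
      have hSfac : (boxPi fun j : Fin l' => H j.succ).IsIsomorphic
          (boxPi (consFam (G 0) E)) :=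
        (hSways.trans ((iso_refl (G 0)).box_congr hQ2fac)).trans (box_boxPi_cons (G 0) E)
      have hconsHfin : ∀ i, Finite (consT (W 0) UE i) := by
        intro i
        rcases Fin.eq_zero_or_eq_succ i with rfl | ⟨j, rfl⟩
        · exact hWfin 0
        · exact hEfin j
      have hconsHirr : ∀ i, (consFam (H 0) E i).Irreducible := by
        intro i
        rcases Fin.eq_zero_or_eq_succ i with rfl | ⟨j, rfl⟩
        · exact hHirr 0
        · exact hEirr j
      have hconsGfin : ∀ i, Finite (consT (V 0) UE i) := by
        intro i
        rcases Fin.eq_zero_or_eq_succ i with rfl | ⟨j, rfl⟩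
        · exact hVfin 0
        · exact hEfin j
      have hconsGirr : ∀ i, (consFam (G 0) E i).Irreducible := by
        intro i
        rcases Fin.eq_zero_or_eq_succ i with rfl | ⟨j, rfl⟩
        · exact hGirr 0
        · exact hEirr j
      obtain ⟨hk'm, π1, hπ1⟩ := ih _ hcR (fun i => G i.succ) (consFam (H 0) E)
        (fun i => hVfin _) hconsHfin (fun i => hGirr _) hconsHirr hRfac le_rfl
      obtain ⟨hl'm, π2, hπ2⟩ := ih _ hcS (fun j => H j.succ) (consFam (G 0) E)
        (fun j => hWfin _) hconsGfin (fun j => hHirr _) hconsGirr hSfac le_rfl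
      refine ⟨by omega, (finSuccEquiv k').trans
        ((Equiv.optionCongr π1).trans ((Equiv.swap (none : Option (Fin (m + 1)))
          (some 0)).trans ((Equiv.optionCongr π2).symm.trans (finSuccEquiv l').symm))),
        fun i => ?_⟩
      rcases Fin.eq_zero_or_eq_succ i with rfl | ⟨i', rfl⟩
      · have hπ0 : ((finSuccEquiv k').trans
            ((Equiv.optionCongr π1).trans ((Equiv.swap (none : Option (Fin (m + 1)))
              (some 0)).trans ((Equiv.optionCongr π2).symm.trans
                (finSuccEquiv l').symm)))) 0 = (π2.symm 0).succ := by
          simp [Equiv.swap_apply_left, ← Equiv.optionCongr_symm, Equiv.optionCongr_apply, finSuccEquiv_symm_some, finSuccEquiv_symm_none]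
        rw [hπ0]
        have h2 := hπ2 (π2.symm 0)
        rw [Equiv.apply_symm_apply, consFam_zero] at h2
        exact h2.symm
      · rcases Fin.eq_zero_or_eq_succ (π1 i') with h0 | ⟨e, he⟩
        · have hπs : ((finSuccEquiv k').trans
              ((Equiv.optionCongr π1).trans ((Equiv.swap (none : Option (Fin (m + 1)))
                (some 0)).trans ((Equiv.optionCongr π2).symm.trans
                  (finSuccEquiv l').symm)))) i'.succ = 0 := by
            simp [h0, Equiv.swap_apply_right, ← Equiv.optionCongr_symm, Equiv.optionCongr_apply, finSuccEquiv_symm_some, finSuccEquiv_symm_none]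
          rw [hπs]
          have h1 := hπ1 i'
          rw [h0, consFam_zero] at h1
          exact h1
        · have hsw : Equiv.swap (none : Option (Fin (m + 1))) (some 0) (some e.succ)
              = some e.succ :=
            Equiv.swap_apply_of_ne_of_ne (Option.some_ne_none _)
              (by simp [Fin.succ_ne_zero])
          have hπs : ((finSuccEquiv k').trans
              ((Equiv.optionCongr π1).trans ((Equiv.swap (none : Option (Fin (m + 1)))
                (some 0)).trans ((Equiv.optionCongr π2).symm.trans
                  (finSuccEquiv l').symm)))) i'.succ = (π2.symm e.succ).succ := by
            simp [he, hsw, ← Equiv.optionCongr_symm, Equiv.optionCongr_apply, finSuccEquiv_symm_some, finSuccEquiv_symm_none]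
          rw [hπs]
          have h1 := hπ1 i'
          rw [he, consFam_succ] at h1
          have h2 := hπ2 (π2.symm e.succ)
          rw [Equiv.apply_symm_apply, consFam_succ] at h2
          exact h1.trans h2.symm

end LoopGraph
/-- Uniqueness of prime factorization: if two products of
irreducible graphs are isomorphic (nontrivial, connected, with an unlooped
vertex), then the factors agree up to a permutation and isomorphisms. -/
theorem prime_factorization_unique {k l : ℕ} {V : Fin k → Type u} {W : Fin l → Type u}
    [∀ i, Fintype (V i)] [∀ j, Fintype (W j)]
    (G : ∀ i, LoopGraph (V i)) (H : ∀ j, LoopGraph (W j))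
    (hGirr : ∀ i, (G i).Irreducible) (hHirr : ∀ j, (H j).Irreducible)
    (hGnt : ¬ (LoopGraph.boxPi G).IsTrivial)
    (hGconn : (LoopGraph.boxPi G).N.Connected)
    (hGul : ∃ v, ¬ (LoopGraph.boxPi G).adj v v)
    (hHnt : ¬ (LoopGraph.boxPi H).IsTrivial)
    (hHconn : (LoopGraph.boxPi H).N.Connected)
    (hHul : ∃ w, ¬ (LoopGraph.boxPi H).adj w w)
    (φ : (∀ i, V i) ≃ (∀ j, W j))
    (hφ : ∀ x y, (LoopGraph.boxPi G).adj x y ↔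
      (LoopGraph.boxPi H).adj (φ x) (φ y)) :
    k = l ∧ ∃ π : Fin k ≃ Fin l, ∀ i, (G i).IsIsomorphic (H (π i)) := by
  classical
  exact LoopGraph.master (Nat.card (∀ i, V i)) G H (fun i => Finite.of_fintype _)
    (fun j => Finite.of_fintype _) hGirr hHirr ⟨φ, hφ⟩ le_rfl
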